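/- Let $\lambda > 0$ and let $X_\lambda$ have the skew-normal distribution $SN(0,1,\lambda)$, with stochastic representation $X_\lambda = \tfrac{\lambda}{\sqrt{1+\lambda^2}}|U| + \tfrac{1}{\sqrt{1+\lambda^2}}V$ where $U, V$ are independent standard normal, and mean $E(X_\lambda) = \tfrac{\lambda}{\sqrt{1+\lambda^2}}\sqrt{2/\pi}$. Then for every $n \ge 2$ there exists $\lambda_0 > 0$ such that for all $\lambda > \lambda_0$: for any random variables $X_1,\dots,X_n$ on a common probability space each distributed as $SN(0,1,\lambda)$, $P(X_1+\cdots+X_n = nE(X_\lambda)) < 1$; i.e., $SN(0,1,\lambda)$ is not $n$-completely mixable. -/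

import Mathlib

open MeasureTheory ProbabilityTheory Set Filter Topology
open scoped NNReal ENNReal Real

lemma gauss_pos {s : Set ℝ} (h : 0 < volume s) : 0 < gaussianReal 0 1 s := by
  rw [gaussianReal_apply 0 one_ne_zero s,
    setLIntegral_pos_iff (measurable_gaussianPDF 0 1)]
  have hsupp : Function.support (gaussianPDF 0 1) = Set.univ := by
    ext x
    simp [Function.mem_support, (gaussianPDF_pos 0 one_ne_zero x).ne']
  rw [hsupp, Set.univ_inter]
  exact h

lemma gauss_le_volume (s : Set ℝ) : gaussianReal 0 1 s ≤ volume s := by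
  rw [gaussianReal_apply 0 one_ne_zero s]
  calc ∫⁻ x in s, gaussianPDF 0 1 x ≤ ∫⁻ _ in s, 1 := by
        refine lintegral_mono fun x => ?_
        rw [gaussianPDF]
        refine ENNReal.ofReal_le_one.2 ?_
        rw [gaussianPDFReal]
        have h1 : (1:ℝ) ≤ Real.sqrt (2 * Real.pi * (1:ℝ≥0)) := by
          rw [show ((1:ℝ≥0):ℝ) = 1 by norm_num, mul_one]
          rw [show (1:ℝ) = Real.sqrt 1 by simp]
          exact Real.sqrt_le_sqrt (by nlinarith [Real.pi_gt_three])
        have h2 : Real.exp (-(x - 0) ^ 2 / (2 * (1:ℝ≥0))) ≤ 1 := by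
          rw [Real.exp_le_one_iff, NNReal.coe_one]
          have h0 : (0:ℝ) ≤ (x - 0)^2 := sq_nonneg _
          nlinarith
        calc (Real.sqrt (2 * Real.pi * (1:ℝ≥0)))⁻¹ * Real.exp (-(x - 0) ^ 2 / (2 * (1:ℝ≥0)))
            ≤ 1 * 1 := by
              apply mul_le_mul _ h2 (Real.exp_nonneg _) zero_le_one
              exact inv_le_one_of_one_le₀ h1
          _ = 1 := by norm_num
    _ = volume s := by simp

lemma gauss_tail {δ : ℝ≥0∞} (hδ : 0 < δ) : ∃ k : ℕ, gaussianReal 0 1 (Iio (-(k:ℝ))) < δ := by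
  have htend : Tendsto (fun k : ℕ => gaussianReal 0 1 (Iio (-(k:ℝ)))) atTop (𝓝 0) := by
    have h := tendsto_measure_iInter_atTop (μ := gaussianReal 0 1)
      (s := fun k : ℕ => Iio (-(k:ℝ)))
      (fun k => measurableSet_Iio.nullMeasurableSet)
      (fun i j hij => Iio_subset_Iio (by simp; exact_mod_cast hij))
      ⟨0, measure_ne_top _ _⟩
    have hempty : (⋂ k : ℕ, Iio (-(k:ℝ))) = (∅ : Set ℝ) := by
      ext x
      simp only [mem_iInter, mem_Iio, mem_empty_iff_false, iff_false, not_forall, not_lt]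
      obtain ⟨k, hk⟩ := exists_nat_gt (-x)
      exact ⟨k, by linarith⟩
    rw [hempty, measure_empty] at h
    exact h
  exact ((htend.eventually_lt_const hδ).exists)

/-- The law of the skew-normal `SN(0,1,λ)` via Henze's representation. -/
noncomputable def skewNormalLaw (l : ℝ) : Measure ℝ :=
  ((gaussianReal 0 1).prod (gaussianReal 0 1)).map
    (fun p => l / Real.sqrt (1 + l ^ 2) * |p.1| + 1 / Real.sqrt (1 + l ^ 2) * p.2)

set_option maxHeartbeats 1000000 in
/-- Theorem 3.3: for each `n ≥ 2` the skew-normal `SN(0,1,λ)` is not `n`-completely mixable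
for sufficiently large `λ`. -/
theorem stmt13 (n : ℕ) (hn : 2 ≤ n) :
    ∃ l₀ : ℝ, 0 < l₀ ∧ ∀ l : ℝ, l₀ < l →
      ∀ (Ω : Type) (_ : MeasurableSpace Ω) (μ : Measure Ω) (_ : IsProbabilityMeasure μ)
        (X : Fin n → Ω → ℝ), (∀ i, Measurable (X i)) →
        (∀ i, μ.map (X i) = skewNormalLaw l) →
        μ {ω | ∑ i, X i ω = n * (l / Real.sqrt (1 + l ^ 2) * Real.sqrt (2 / Real.pi))} < 1 := by
  classical
  set γ := gaussianReal 0 1 with hγ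
  have hε1 : 0 < γ (Ioi (2 * n + 2 : ℝ)) := gauss_pos (by simp [Real.volume_Ioi])
  have hε2 : 0 < γ (Ioo (-1 : ℝ) 1) := by
    refine gauss_pos ?_
    rw [Real.volume_Ioo]
    norm_num
  set ε := γ (Ioi (2 * n + 2 : ℝ)) * γ (Ioo (-1 : ℝ) 1) with hε
  have hεpos : 0 < ε := ENNReal.mul_pos hε1.ne' hε2.ne'
  have hεfin : ε ≠ ⊤ := ENNReal.mul_ne_top (measure_ne_top _ _) (measure_ne_top _ _)
  have hn0 : (n : ℝ≥0∞) ≠ 0 := Nat.cast_ne_zero.2 (by omega)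
  set δ := ε / (2 * n : ℝ≥0∞) with hδ
  have h2n : (2 * n : ℝ≥0∞) ≠ 0 := mul_ne_zero two_ne_zero hn0
  have h2n' : (2 * n : ℝ≥0∞) ≠ ⊤ := by finiteness
  have hδpos : 0 < δ := ENNReal.div_pos hεpos.ne' h2n'
  have hδfin : δ ≠ ⊤ := (ENNReal.div_lt_top hεfin h2n).ne
  set s : ℝ := δ.toReal / 4 with hs_def
  have hs : 0 < s := by
    apply div_pos _ (by norm_num)
    exact ENNReal.toReal_pos hδpos.ne' hδfin
  have hIoo : γ (Ioo (-s) s) < δ := by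
    refine lt_of_le_of_lt (gauss_le_volume _) ?_
    rw [Real.volume_Ioo]
    have h4 : s - -s = δ.toReal / 2 := by rw [hs_def]; ring
    rw [h4]
    calc ENNReal.ofReal (δ.toReal / 2) < ENNReal.ofReal δ.toReal := by
          rw [ENNReal.ofReal_lt_ofReal_iff (ENNReal.toReal_pos hδpos.ne' hδfin)]
          linarith [ENNReal.toReal_pos hδpos.ne' hδfin]
      _ = δ := ENNReal.ofReal_toReal hδfin
  obtain ⟨k, hk⟩ := gauss_tail hδpos
  clear_value ε δ s
  refine ⟨max 1 ((k + 1) / s), lt_of_lt_of_le one_pos (le_max_left _ _), ?_⟩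
  intro l hl Ω mΩ μ hμ X hXm hXd
  have hl1 : 1 < l := lt_of_le_of_lt (le_max_left _ _) hl
  have hl0 : 0 < l := lt_trans one_pos hl1
  have hls : (k : ℝ) ≤ l * s := by
    have h5 : (k + 1) / s < l := lt_of_le_of_lt (le_max_right _ _) hl
    have h6 := (div_lt_iff₀ hs).1 h5
    nlinarith
  set b : ℝ := 1 / Real.sqrt (1 + l ^ 2) with hb_def
  set a : ℝ := l / Real.sqrt (1 + l ^ 2) with ha_def
  have hsq : 0 < Real.sqrt (1 + l ^ 2) := Real.sqrt_pos.2 (by positivity)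
  have hb : 0 < b := by positivity
  have ha : 0 < a := by positivity
  have hab : a = l * b := by rw [ha_def, hb_def]; ring
  set c : ℝ := n * (a * Real.sqrt (2 / Real.pi)) with hc_def
  have hsqrt1 : Real.sqrt (2 / Real.pi) ≤ 1 := by
    rw [show (1:ℝ) = Real.sqrt 1 by simp]
    apply Real.sqrt_le_sqrt
    rw [div_le_one Real.pi_pos]
    linarith [Real.pi_gt_three]
  have hc0 : 0 ≤ c := by positivity
  set f : ℝ × ℝ → ℝ := fun p => a * |p.1| + b * p.2 with hf_def
  have hf : Measurable f := by
    apply Measurable.add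
    · exact (measurable_fst.abs).const_mul a
    · exact measurable_snd.const_mul b
  set ν := skewNormalLaw l with hν
  have hν_eq : ν = (γ.prod γ).map f := rfl
  have hν_apply : ∀ t : Set ℝ, MeasurableSet t → ν t = (γ.prod γ) (f ⁻¹' t) := by
    intro t ht
    rw [hν_eq, Measure.map_apply hf ht]
  have hprob : IsProbabilityMeasure ν := by
    rw [hν_eq]
    exact Measure.isProbabilityMeasure_map hf.aemeasurable
  clear_value a b c f ν
  -- lower bound: ε ≤ ν (Ioi c)
  have hn2 : (2:ℝ) ≤ n := by exact_mod_cast hn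
  have hlow : ε ≤ ν (Ioi c) := by
    rw [hν_apply _ measurableSet_Ioi]
    have hsub : (Ioi (2 * n + 2 : ℝ)) ×ˢ (Ioo (-1 : ℝ) 1) ⊆ f ⁻¹' Ioi c := by
      rintro ⟨u, v⟩ ⟨hu, hv1, hv2⟩
      simp only [mem_Ioi, mem_Ioo] at hu hv1 hv2
      simp only [mem_preimage, mem_Ioi, hf_def]
      have hu0 : 0 < u := lt_trans (by positivity) hu
      rw [abs_of_pos hu0]
      have h1 : c ≤ n * a := by
        rw [hc_def]
        have h7 := mul_le_of_le_one_right ha.le hsqrt1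
        nlinarith
      have hkey : (1:ℝ) < l * (n + 2) := by nlinarith
      have h2 : (n:ℝ) * a < a * u + b * v := by
        have h8 : a * (2 * n + 2) ≤ a * u := by nlinarith
        have h9 : -b < b * v := by nlinarith
        have h10 : (n:ℝ) * a < a * (2 * n + 2) - b := by
          rw [hab]
          nlinarith [mul_pos hb (sub_pos.2 hkey)]
        linarith
      linarith
    calc ε = γ (Ioi (2 * n + 2 : ℝ)) * γ (Ioo (-1 : ℝ) 1) := hε
      _ = (γ.prod γ) ((Ioi (2 * n + 2 : ℝ)) ×ˢ (Ioo (-1 : ℝ) 1)) := (Measure.prod_prod _ _).symm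
      _ ≤ (γ.prod γ) (f ⁻¹' Ioi c) := measure_mono hsub
  have hεle1 : ε ≤ 1 := le_trans hlow prob_le_one
  -- upper bound: ν (Iio 0) < 2δ
  have hup : ν (Iio 0) < δ + δ := by
    rw [hν_apply _ measurableSet_Iio]
    have hsub : f ⁻¹' Iio 0 ⊆
        (Ioo (-s) s) ×ˢ (univ : Set ℝ) ∪ (univ : Set ℝ) ×ˢ Iio (-(l * s)) := by
      rintro ⟨u, v⟩ hp
      simp only [mem_preimage, mem_Iio, hf_def] at hp
      by_cases hu : |u| < s
      · left
        exact ⟨abs_lt.1 hu, mem_univ _⟩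
      · right
        refine ⟨mem_univ _, ?_⟩
        push_neg at hu
        simp only [mem_Iio]
        rw [hab] at hp
        nlinarith [abs_nonneg u]
    calc (γ.prod γ) (f ⁻¹' Iio 0)
        ≤ (γ.prod γ) ((Ioo (-s) s) ×ˢ (univ : Set ℝ)) +
          (γ.prod γ) ((univ : Set ℝ) ×ˢ Iio (-(l * s))) :=
          le_trans (measure_mono hsub) (measure_union_le _ _)
      _ = γ (Ioo (-s) s) + γ (Iio (-(l * s))) := by
          rw [Measure.prod_prod, Measure.prod_prod, measure_univ, mul_one, one_mul]
      _ < δ + δ := by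
          refine ENNReal.add_lt_add hIoo (lt_of_le_of_lt ?_ hk)
          exact measure_mono (Iio_subset_Iio (by linarith))
  -- the bad event
  have hnpos : 0 < n := by omega
  set i₀ : Fin n := ⟨0, hnpos⟩ with hi₀
  set A : Set Ω := {ω | X i₀ ω ≤ c} ∪ ⋃ i, {ω | X i ω < 0} with hA
  have hsubset : {ω | ∑ i, X i ω = c} ⊆ A := by
    intro ω hω
    by_contra hcon
    rw [hA] at hcon
    simp only [mem_union, mem_iUnion, mem_setOf_eq, not_or, not_exists, not_le, not_lt] at hcon
    obtain ⟨h0, hi⟩ := hcon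
    have hsum : X i₀ ω ≤ ∑ i, X i ω :=
      Finset.single_le_sum (fun i _ => hi i) (Finset.mem_univ i₀)
    rw [mem_setOf_eq] at hω
    have : c < ∑ i, X i ω := lt_of_lt_of_le h0 hsum
    linarith [hω ▸ this]
  -- measures of the bad events
  have hB0 : μ {ω | X i₀ ω ≤ c} = ν (Iic c) := by
    have h11 : {ω | X i₀ ω ≤ c} = X i₀ ⁻¹' Iic c := rfl
    rw [h11, ← Measure.map_apply (hXm i₀) measurableSet_Iic, hXd i₀]
  have hBi : ∀ i : Fin n, μ {ω | X i ω < 0} = ν (Iio 0) := by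
    intro i
    have h12 : {ω | X i ω < 0} = X i ⁻¹' Iio 0 := rfl
    rw [h12, ← Measure.map_apply (hXm i) measurableSet_Iio, hXd i]
  have hIic : ν (Iic c) ≤ 1 - ε := by
    have hcompl : ν (Iic c) = 1 - ν (Ioi c) := by
      rw [← compl_Ioi, measure_compl measurableSet_Ioi (measure_ne_top _ _), measure_univ]
    rw [hcompl]
    exact tsub_le_tsub_left hlow 1
  have hsum_le : μ A ≤ (1 - ε) + (n : ℝ≥0∞) * ν (Iio 0) := by
    calc μ A ≤ μ {ω | X i₀ ω ≤ c} + μ (⋃ i, {ω | X i ω < 0}) := measure_union_le _ _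
      _ ≤ ν (Iic c) + ∑ i, μ {ω | X i ω < 0} := by
          rw [hB0]
          exact add_le_add_right (measure_iUnion_fintype_le μ _) _
      _ = ν (Iic c) + (n : ℝ≥0∞) * ν (Iio 0) := by
          congr 1
          rw [Finset.sum_congr rfl (fun i _ => hBi i), Finset.sum_const, Finset.card_univ,
            Fintype.card_fin, nsmul_eq_mul]
      _ ≤ (1 - ε) + (n : ℝ≥0∞) * ν (Iio 0) := add_le_add_left hIic _
  have hfinal : (n : ℝ≥0∞) * ν (Iio 0) < ε := by
    calc (n : ℝ≥0∞) * ν (Iio 0) < (n : ℝ≥0∞) * (δ + δ) := by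
          rw [ENNReal.mul_lt_mul_iff_right hn0 (by finiteness)]
          exact hup
      _ = (2 * n : ℝ≥0∞) * δ := by ring
      _ = ε := by rw [hδ]; exact ENNReal.mul_div_cancel h2n h2n'
  calc μ {ω | ∑ i, X i ω = c} ≤ μ A := measure_mono hsubset
    _ ≤ (1 - ε) + (n : ℝ≥0∞) * ν (Iio 0) := hsum_le
    _ < (1 - ε) + ε := ENNReal.add_lt_add_left
        (ne_top_of_le_ne_top (by finiteness) tsub_le_self) hfinal
    _ = 1 := tsub_add_cancel_of_le hεle1
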